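/- Let (x, y) be a feasible solution of the offline sampling model in which some flow f is assigned to at least two switches, and suppose a · y f < b · C. Then removing f's assignment from one of those switches yields another feasible solution with strictly larger objective value. Consequently, in any optimal solution, every flow f with a · y f < b · C is assigned to exactly one switch. -/
import Mathlib


/-- If a flow f is assigned to two distinct switches and a·y f < b·C, then removing one
of its assignments gives a feasible solution with strictly larger objective; consequently
the given solution is not optimal. -/
theorem offline_remove_redundant_assignment
    {S F : Type} [Fintype S] [Fintype F]
    (c : S → ℝ) (r : F → ℝ) (hr : ∀ f, 0 < r f)
    (t : F → S → Prop)
    (a b C : ℝ) (ha : 0 ≤ a) (hb : 0 ≤ b) (hC : 0 ≤ C)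
    (x : F → S → Bool) (y : F → ℝ)
    (hy : ∀ g, r g ≤ y g)
    (hsat : ∀ g, ∃ s, x g s = true)
    (hpath : ∀ g s, x g s = true → t g s)
    (hcap : ∀ s, ∑ g ∈ Finset.univ.filter (fun g => x g s = true), y g ≤ c s)
    (f : F) (s₁ s₂ : S) (hne : s₁ ≠ s₂)
    (h₁ : x f s₁ = true) (h₂ : x f s₂ = true)
    (hlt : a * y f < b * C) :
    (∃ x' : F → S → Bool,
      (∀ g, ∃ s, x' g s = true) ∧
      (∀ g s, x' g s = true → t g s) ∧
      (∀ s, ∑ g ∈ Finset.univ.filter (fun g => x' g s = true), y g ≤ c s) ∧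
      ∑ s, ∑ g, (a * (if x g s then y g else 0) - b * C * (if x g s then 1 else 0))
        < ∑ s, ∑ g, (a * (if x' g s then y g else 0) - b * C * (if x' g s then 1 else 0))) ∧
    ¬ (∀ (x' : F → S → Bool) (y' : F → ℝ),
        (∀ g, r g ≤ y' g) →
        (∀ g, ∃ s, x' g s = true) →
        (∀ g s, x' g s = true → t g s) →
        (∀ s, ∑ g ∈ Finset.univ.filter (fun g => x' g s = true), y' g ≤ c s) →
        ∑ s, ∑ g, (a * (if x' g s then y' g else 0) - b * C * (if x' g s then 1 else 0))
          ≤ ∑ s, ∑ g, (a * (if x g s then y g else 0) - b * C * (if x g s then 1 else 0))) := by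
  classical
  set x' : F → S → Bool := fun g s => if g = f ∧ s = s₂ then false else x g s with hx'
  have hx'ne : ∀ g s, ¬ (g = f ∧ s = s₂) → x' g s = x g s := by
    intro g s h; simp only [hx', if_neg h]
  have hx'f : x' f s₂ = false := by simp [hx']
  have hmain : (∀ g, ∃ s, x' g s = true) ∧
      (∀ g s, x' g s = true → t g s) ∧
      (∀ s, ∑ g ∈ Finset.univ.filter (fun g => x' g s = true), y g ≤ c s) ∧
      ∑ s, ∑ g, (a * (if x g s then y g else 0) - b * C * (if x g s then 1 else 0))
        < ∑ s, ∑ g, (a * (if x' g s then y g else 0) - b * C * (if x' g s then 1 else 0)) := by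
    refine ⟨?_, ?_, ?_, ?_⟩
    · intro g
      by_cases hg : g = f
      · exact ⟨s₁, by rw [hx'ne g s₁ (by simp [hne]), hg, h₁]⟩
      · obtain ⟨s, hs⟩ := hsat g
        exact ⟨s, by rw [hx'ne g s (by simp [hg]), hs]⟩
    · intro g s hgs
      apply hpath g s
      by_cases h : g = f ∧ s = s₂
      · simp [hx', h] at hgs
      · rwa [hx'ne g s h] at hgs
    · intro s
      refine le_trans (Finset.sum_le_sum_of_subset_of_nonneg ?_ ?_) (hcap s)
      · intro g hg
        simp only [Finset.mem_filter, Finset.mem_univ, true_and] at hg ⊢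
        by_cases h : g = f ∧ s = s₂
        · simp [hx', h] at hg
        · rwa [hx'ne g s h] at hg
      · intro g _ _; exact le_of_lt (lt_of_lt_of_le (hr g) (hy g))
    · apply Finset.sum_lt_sum
      · intro s _
        by_cases hs : s = s₂
        · rw [hs]
          apply Finset.sum_le_sum
          intro g _
          by_cases hg : g = f
          · subst hg
            rw [h₂, hx'f]
            norm_num
            nlinarith
          · rw [hx'ne g s₂ (by simp [hg])]
        · apply le_of_eq
          apply Finset.sum_congr rfl
          intro g _
          rw [hx'ne g s (by simp [hs])]
      · refine ⟨s₂, Finset.mem_univ _, ?_⟩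
        apply Finset.sum_lt_sum
        · intro g _
          by_cases hg : g = f
          · subst hg
            rw [h₂, hx'f]; norm_num; nlinarith
          · rw [hx'ne g s₂ (by simp [hg])]
        · refine ⟨f, Finset.mem_univ _, ?_⟩
          rw [h₂, hx'f]; norm_num; nlinarith
  refine ⟨⟨x', hmain⟩, fun hopt => ?_⟩
  obtain ⟨h1, h2, h3, h4⟩ := hmain
  exact absurd (hopt x' y hy h1 h2 h3) (not_le.mpr h4)
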